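/- For any three points x̄₁,x̄₂,x̄₃ in the Euclidean plane ℝ² whose Gromov products r₁,r₂,r₃ are all positive, there exists a point x ∈ ℝ² with ‖x−x̄ᵢ‖ ≤ (2/√3)·rᵢ for i = 1,2,3; equivalently, ρ(x̄₁,x̄₂,x̄₃) := inf over x ∈ ℝ² of max{‖x−x̄₁‖/r₁, ‖x−x̄₂‖/r₂, ‖x−x̄₃‖/r₃} is at most 2/√3. -/

import Mathlib

/-- ρ(x₁,x₂,x₃) for given (Gromov product) radii r₁,r₂,r₃. -/
noncomputable def rho3 {X : Type*} [MetricSpace X] (x₁ x₂ x₃ : X) (r₁ r₂ r₃ : ℝ) : ℝ :=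
  ⨅ x : X, max (dist x₁ x / r₁) (max (dist x₂ x / r₂) (dist x₃ x / r₃))

lemma norm_comb {E : Type*} [NormedAddCommGroup E] [InnerProductSpace ℝ E]
    (u v : E) (s t : ℝ) :
    ‖s • u + t • v‖ ^ 2 =
      s ^ 2 * ‖u‖ ^ 2 + t ^ 2 * ‖v‖ ^ 2 + s * t * (‖u‖ ^ 2 + ‖v‖ ^ 2 - ‖u - v‖ ^ 2) := by
  have h1 : ‖u - v‖ ^ 2 = ‖u‖ ^ 2 - 2 * inner ℝ u v + ‖v‖ ^ 2 := norm_sub_sq_real u v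
  have h2 : ‖s • u + t • v‖ ^ 2
      = ‖s • u‖ ^ 2 + 2 * inner ℝ (s • u) (t • v) + ‖t • v‖ ^ 2 := norm_add_sq_real _ _
  rw [h2, real_inner_smul_left, real_inner_smul_right, norm_smul, norm_smul, h1]
  simp [mul_pow, sq_abs]
  ring

lemma sqrt3_pos : (0:ℝ) < Real.sqrt 3 := Real.sqrt_pos.mpr (by norm_num)

lemma le_of_sq_le_sq' {d K : ℝ} (_hd : 0 ≤ d) (hK : 0 ≤ K) (h : d ^ 2 ≤ K ^ 2) : d ≤ K := by
  nlinarith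

set_option maxHeartbeats 1000000 in
/-- For any triple in the Euclidean plane with positive Gromov products, some
point is within `(2/√3)·rᵢ` of each vertex; equivalently ρ ≤ 2/√3. -/
theorem stmt15 (x₁ x₂ x₃ : EuclideanSpace ℝ (Fin 2)) (r₁ r₂ r₃ : ℝ)
    (hr₁ : r₁ = (dist x₁ x₂ + dist x₁ x₃ - dist x₂ x₃) / 2)
    (hr₂ : r₂ = (dist x₁ x₂ + dist x₂ x₃ - dist x₁ x₃) / 2)
    (hr₃ : r₃ = (dist x₁ x₃ + dist x₂ x₃ - dist x₁ x₂) / 2)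
    (h₁ : 0 < r₁) (h₂ : 0 < r₂) (h₃ : 0 < r₃) :
    (∃ x : EuclideanSpace ℝ (Fin 2),
      dist x₁ x ≤ 2 / Real.sqrt 3 * r₁ ∧
      dist x₂ x ≤ 2 / Real.sqrt 3 * r₂ ∧
      dist x₃ x ≤ 2 / Real.sqrt 3 * r₃) ∧
    rho3 x₁ x₂ x₃ r₁ r₂ r₃ ≤ 2 / Real.sqrt 3 := by
  have hc : dist x₁ x₂ = r₁ + r₂ := by rw [hr₁, hr₂]; ring
  have hb : dist x₁ x₃ = r₁ + r₃ := by rw [hr₁, hr₃]; ring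
  have ha : dist x₂ x₃ = r₂ + r₃ := by rw [hr₂, hr₃]; ring
  set D : ℝ := r₁ * r₂ + r₁ * r₃ + r₂ * r₃ with hDdef
  have hD : 0 < D := by positivity
  set w₁ : ℝ := r₂ * r₃ / D with hw₁
  set w₂ : ℝ := r₁ * r₃ / D with hw₂
  set w₃ : ℝ := r₁ * r₂ / D with hw₃
  have hw : w₁ + w₂ + w₃ = 1 := by
    rw [hw₁, hw₂, hw₃]; field_simp; ring
  set x : EuclideanSpace ℝ (Fin 2) := w₁ • x₁ + w₂ • x₂ + w₃ • x₃ with hx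
  have e1 : x₁ - x = w₂ • (x₁ - x₂) + w₃ • (x₁ - x₃) := by
    rw [hx]
    have : w₁ = 1 - w₂ - w₃ := by linarith
    rw [this]; module
  have e2 : x₂ - x = w₁ • (x₂ - x₁) + w₃ • (x₂ - x₃) := by
    rw [hx]
    have : w₂ = 1 - w₁ - w₃ := by linarith
    rw [this]; module
  have e3 : x₃ - x = w₁ • (x₃ - x₁) + w₂ • (x₃ - x₂) := by
    rw [hx]
    have : w₃ = 1 - w₁ - w₂ := by linarith
    rw [this]; module
  -- squared distances
  have hKpos : ∀ r : ℝ, 0 < r → 0 ≤ 2 / Real.sqrt 3 * r := fun r hr =>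
    le_of_lt (mul_pos (div_pos (by norm_num) sqrt3_pos) hr)
  have hKsq : ∀ r : ℝ, (2 / Real.sqrt 3 * r) ^ 2 = 4 / 3 * r ^ 2 := by
    intro r
    rw [mul_pow, div_pow, Real.sq_sqrt (by norm_num : (3:ℝ) ≥ 0)]
    ring
  have d1 : dist x₁ x ≤ 2 / Real.sqrt 3 * r₁ := by
    refine le_of_sq_le_sq' dist_nonneg (hKpos _ h₁) ?_
    rw [hKsq, dist_eq_norm, e1, norm_comb]
    have h12 : ‖x₁ - x₂‖ = r₁ + r₂ := by rw [← dist_eq_norm, hc]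
    have h13 : ‖x₁ - x₃‖ = r₁ + r₃ := by rw [← dist_eq_norm, hb]
    have h23 : ‖(x₁ - x₂) - (x₁ - x₃)‖ = r₂ + r₃ := by
      have : (x₁ - x₂) - (x₁ - x₃) = x₃ - x₂ := by abel
      rw [this, ← dist_eq_norm, dist_comm, ha]
    rw [h12, h13, h23, hw₂, hw₃]
    have hL : (r₁ * r₃ / D) ^ 2 * (r₁ + r₂) ^ 2 + (r₁ * r₂ / D) ^ 2 * (r₁ + r₃) ^ 2 +
        r₁ * r₃ / D * (r₁ * r₂ / D) * ((r₁ + r₂) ^ 2 + (r₁ + r₃) ^ 2 - (r₂ + r₃) ^ 2)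
        = ((r₁ * r₃) ^ 2 * (r₁ + r₂) ^ 2 + (r₁ * r₂) ^ 2 * (r₁ + r₃) ^ 2 +
          (r₁ * r₃) * (r₁ * r₂) * ((r₁ + r₂) ^ 2 + (r₁ + r₃) ^ 2 - (r₂ + r₃) ^ 2)) / D ^ 2 := by
      field_simp
    rw [hL, div_le_iff₀ (by positivity), hDdef]
    nlinarith [sq_nonneg (r₁ * (r₁ * r₂ + r₁ * r₃ - 2 * r₂ * r₃))]
  have d2 : dist x₂ x ≤ 2 / Real.sqrt 3 * r₂ := by
    refine le_of_sq_le_sq' dist_nonneg (hKpos _ h₂) ?_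
    rw [hKsq, dist_eq_norm, e2, norm_comb]
    have h21 : ‖x₂ - x₁‖ = r₁ + r₂ := by rw [← dist_eq_norm, dist_comm, hc]
    have h23 : ‖x₂ - x₃‖ = r₂ + r₃ := by rw [← dist_eq_norm, ha]
    have h13 : ‖(x₂ - x₁) - (x₂ - x₃)‖ = r₁ + r₃ := by
      have : (x₂ - x₁) - (x₂ - x₃) = x₃ - x₁ := by abel
      rw [this, ← dist_eq_norm, dist_comm, hb]
    rw [h21, h23, h13, hw₁, hw₃]
    have hL : (r₂ * r₃ / D) ^ 2 * (r₁ + r₂) ^ 2 + (r₁ * r₂ / D) ^ 2 * (r₂ + r₃) ^ 2 +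
        r₂ * r₃ / D * (r₁ * r₂ / D) * ((r₁ + r₂) ^ 2 + (r₂ + r₃) ^ 2 - (r₁ + r₃) ^ 2)
        = ((r₂ * r₃) ^ 2 * (r₁ + r₂) ^ 2 + (r₁ * r₂) ^ 2 * (r₂ + r₃) ^ 2 +
          (r₂ * r₃) * (r₁ * r₂) * ((r₁ + r₂) ^ 2 + (r₂ + r₃) ^ 2 - (r₁ + r₃) ^ 2)) / D ^ 2 := by
      field_simp
    rw [hL, div_le_iff₀ (by positivity), hDdef]
    nlinarith [sq_nonneg (r₂ * (r₁ * r₂ + r₂ * r₃ - 2 * r₁ * r₃))]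
  have d3 : dist x₃ x ≤ 2 / Real.sqrt 3 * r₃ := by
    refine le_of_sq_le_sq' dist_nonneg (hKpos _ h₃) ?_
    rw [hKsq, dist_eq_norm, e3, norm_comb]
    have h31 : ‖x₃ - x₁‖ = r₁ + r₃ := by rw [← dist_eq_norm, dist_comm, hb]
    have h32 : ‖x₃ - x₂‖ = r₂ + r₃ := by rw [← dist_eq_norm, dist_comm, ha]
    have h12 : ‖(x₃ - x₁) - (x₃ - x₂)‖ = r₁ + r₂ := by
      have : (x₃ - x₁) - (x₃ - x₂) = x₂ - x₁ := by abel
      rw [this, ← dist_eq_norm, dist_comm, hc]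
    rw [h31, h32, h12, hw₁, hw₂]
    have hL : (r₂ * r₃ / D) ^ 2 * (r₁ + r₃) ^ 2 + (r₁ * r₃ / D) ^ 2 * (r₂ + r₃) ^ 2 +
        r₂ * r₃ / D * (r₁ * r₃ / D) * ((r₁ + r₃) ^ 2 + (r₂ + r₃) ^ 2 - (r₁ + r₂) ^ 2)
        = ((r₂ * r₃) ^ 2 * (r₁ + r₃) ^ 2 + (r₁ * r₃) ^ 2 * (r₂ + r₃) ^ 2 +
          (r₂ * r₃) * (r₁ * r₃) * ((r₁ + r₃) ^ 2 + (r₂ + r₃) ^ 2 - (r₁ + r₂) ^ 2)) / D ^ 2 := by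
      field_simp
    rw [hL, div_le_iff₀ (by positivity), hDdef]
    nlinarith [sq_nonneg (r₃ * (r₁ * r₃ + r₂ * r₃ - 2 * r₁ * r₂))]
  refine ⟨⟨x, d1, d2, d3⟩, ?_⟩
  have hbdd : BddBelow (Set.range fun y : EuclideanSpace ℝ (Fin 2) =>
      max (dist x₁ y / r₁) (max (dist x₂ y / r₂) (dist x₃ y / r₃))) := by
    refine ⟨0, ?_⟩
    rintro _ ⟨y, rfl⟩
    have : (0:ℝ) ≤ dist x₁ y / r₁ := by positivity
    exact le_trans this (le_max_left _ _)
  refine le_trans (ciInf_le hbdd x) ?_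
  have t1 : dist x₁ x / r₁ ≤ 2 / Real.sqrt 3 := by
    rw [div_le_iff₀ h₁]; exact d1
  have t2 : dist x₂ x / r₂ ≤ 2 / Real.sqrt 3 := by
    rw [div_le_iff₀ h₂]; exact d2
  have t3 : dist x₃ x / r₃ ≤ 2 / Real.sqrt 3 := by
    rw [div_le_iff₀ h₃]; exact d3
  exact max_le t1 (max_le t2 t3)
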